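/- Let N ≥ 1 and let x : Fin N → EuclideanSpace ℝ (Fin n) be a configuration of rank k, i.e. Module.finrank ℝ (vectorSpan ℝ (Set.range x)) = k, and let X : Matrix (Fin N) (Fin n) ℝ be the matrix with entries X i k = x i k. Then Module.finrank ℝ (Submodule.span ℝ {M' | ∃ M : Matrix (Fin N) (Fin N) ℝ, M.mulVec (fun _ => (1:ℝ)) = 0 ∧ M' = M * X}) = k * N. In particular, if k < n these products do not span Matrix (Fin N) (Fin n) ℝ, so the Lie algebra rank condition fails at any degenerate configuration. -/

import Mathlib

open Module

/-- The matrix whose `i`-th row is the point `x i`. -/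
def configMatrix {N n : ℕ} (x : Fin N → EuclideanSpace ℝ (Fin n)) :
    Matrix (Fin N) (Fin n) ℝ :=
  Matrix.of fun i k => x i k

/-- Restriction equivalence for a pi submodule. -/
def piSubmoduleEquiv {ι : Type*} {R : Type*} [Semiring R] {φ : ι → Type*}
    [∀ i, AddCommMonoid (φ i)] [∀ i, Module R (φ i)] (p : ∀ i, Submodule R (φ i)) :
    (Submodule.pi Set.univ p) ≃ₗ[R] (∀ i, p i) where
  toFun v i := ⟨v.1 i, v.2 i trivial⟩
  invFun f := ⟨fun i => f i, fun i _ => (f i).2⟩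
  left_inv _ := rfl
  right_inv _ := rfl
  map_add' _ _ := rfl
  map_smul' _ _ := rfl

theorem finrank_span_zeroRowSum_mul_config {N n k : ℕ} (hN : 1 ≤ N)
    (x : Fin N → EuclideanSpace ℝ (Fin n))
    (hx : Module.finrank ℝ (vectorSpan ℝ (Set.range x)) = k) :
    Module.finrank ℝ (Submodule.span ℝ
      {M' : Matrix (Fin N) (Fin n) ℝ |
        ∃ M : Matrix (Fin N) (Fin N) ℝ,
          M.mulVec (fun _ => (1 : ℝ)) = 0 ∧ M' = M * configMatrix x}) = k * N := by
  classical
  set e := (WithLp.linearEquiv 2 ℝ (Fin n → ℝ)) with he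
  set V := vectorSpan ℝ (Set.range x) with hV
  set W : Submodule ℝ (Fin n → ℝ) := V.map e.toLinearMap with hW
  have hWk : finrank ℝ W = k := by
    rw [hW, LinearEquiv.finrank_map_eq]; exact hx
  set P : Submodule ℝ (Matrix (Fin N) (Fin n) ℝ) :=
    Submodule.pi Set.univ (fun _ : Fin N => W) with hP
  have i0 : Fin N := ⟨0, hN⟩
  -- sums of points with weights summing to zero lie in the vector span
  have key : ∀ (c : Fin N → ℝ), (∑ l, c l) = 0 → (∑ l, c l • x l) ∈ V := by
    intro c hc
    have h1 : (∑ l, c l • x l) = ∑ l, c l • (x l - x i0) := by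
      simp only [smul_sub, Finset.sum_sub_distrib, ← Finset.sum_smul, hc, zero_smul, sub_zero]
    rw [h1]
    exact Submodule.sum_mem _ fun l _ => Submodule.smul_mem _ _
      (vsub_mem_vectorSpan ℝ (Set.mem_range_self l) (Set.mem_range_self i0))
  have hspan_eq : Submodule.span ℝ
      {M' : Matrix (Fin N) (Fin n) ℝ |
        ∃ M : Matrix (Fin N) (Fin N) ℝ,
          M.mulVec (fun _ => (1 : ℝ)) = 0 ∧ M' = M * configMatrix x} = P := by
    apply le_antisymm
    · rw [Submodule.span_le]
      rintro _ ⟨M, hM, rfl⟩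
      intro i _
      have hrow : (∑ l, M i l) = 0 := by
        have := congrFun hM i
        simpa [Matrix.mulVec, dotProduct] using this
      refine ⟨∑ l, M i l • x l, key _ hrow, ?_⟩
      rw [map_sum]
      funext j
      simp [Finset.sum_apply, configMatrix, Matrix.mul_apply, e]
    · intro y hy
      have hy' : y = ∑ i, Pi.single i (y i) := (Finset.univ_sum_single y).symm
      rw [hy']
      refine Submodule.sum_mem _ fun i _ => ?_
      have hWle : W ≤ Submodule.comap
          ({ toFun := fun v => Matrix.of (Pi.single i v),
             map_add' := fun u v => by
               funext i' j
               by_cases h : i' = i <;>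
                 simp [Pi.single_apply, h]
             map_smul' := fun c v => by
               funext i' j
               by_cases h : i' = i <;>
                 simp [Pi.single_apply, h] } :
            (Fin n → ℝ) →ₗ[ℝ] Matrix (Fin N) (Fin n) ℝ)
          (Submodule.span ℝ
            {M' : Matrix (Fin N) (Fin n) ℝ |
              ∃ M : Matrix (Fin N) (Fin N) ℝ,
                M.mulVec (fun _ => (1 : ℝ)) = 0 ∧ M' = M * configMatrix x}) := by
        rw [hW, hV, vectorSpan_def, Submodule.map_span, Submodule.span_le]
        rintro _ ⟨_, ⟨_, ⟨a, rfl⟩, _, ⟨b, rfl⟩, rfl⟩, rfl⟩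
        simp only [Submodule.mem_comap, SetLike.mem_coe, LinearMap.coe_mk, AddHom.coe_mk]
        apply Submodule.subset_span
        refine ⟨Matrix.of (Pi.single i (Pi.single a (1:ℝ) - Pi.single b 1)), ?_, ?_⟩
        · funext i'
          simp only [Matrix.mulVec, dotProduct, Matrix.of_apply, Pi.zero_apply]
          by_cases h : i' = i
          · subst h
            simp [Pi.single_apply, sub_mul, Finset.sum_sub_distrib]
          · simp [Pi.single_eq_of_ne h]
        · funext i' j
          by_cases h : i' = i
          · subst h
            show Matrix.of (Pi.single i' (e (x a -ᵥ x b))) i' j = _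
            simp only [Matrix.of_apply, Pi.single_eq_same]
            simp [Matrix.mul_apply, Pi.single_apply, sub_mul,
              Finset.sum_sub_distrib, configMatrix, e, vsub_eq_sub]
          · show Matrix.of (Pi.single i (e (x a -ᵥ x b))) i' j = _
            simp only [Matrix.of_apply, Pi.single_eq_of_ne h]
            simp [Matrix.mul_apply, Pi.single_apply, h]
      exact hWle (hy i trivial)
  rw [hspan_eq, hP]
  have hfin : finrank ℝ (∀ _ : Fin N, W) = k * N := by
    rw [finrank_pi_fintype, Finset.sum_const, smul_eq_mul, Finset.card_univ,
      Fintype.card_fin, hWk, mul_comm]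
  exact ((piSubmoduleEquiv (fun _ : Fin N => W)).finrank_eq).trans hfin
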